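/- For q a positive natural number, the function U(s) = (1 + k·e^{qs/√(q+1)})^{-1/q} with k > 0 satisfies U'(s) = (1/√(q+1))·U(s)(U(s)^q - 1) for all real s, and u(x,t) = U(x - t/√(q+1)) satisfies the PDE ∂u/∂t = u^{q+1}(1 - u^q) + ∂²u/∂x². -/

import Mathlib

theorem power_nonlinearity_traveling_wave (q : ℕ) (hq : 1 ≤ q) (k : ℝ) (hk : 0 < k)
    (U : ℝ → ℝ)
    (hU : ∀ s, U s =
      (1 + k * Real.exp ((q : ℝ) * s / Real.sqrt (q + 1))) ^ (-(1 : ℝ) / q))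
    (u : ℝ → ℝ → ℝ) (hu : ∀ x t, u x t = U (x - t / Real.sqrt (q + 1))) :
    (∀ s : ℝ, deriv U s = (1 / Real.sqrt (q + 1)) * U s * ((U s) ^ q - 1)) ∧
    (∀ x t : ℝ,
      deriv (fun t' => u x t') t =
        (u x t) ^ (q + 1) * (1 - (u x t) ^ q)
          + deriv (deriv (fun x' => u x' t)) x) := by
  obtain ⟨m, rfl⟩ : ∃ m, q = m + 1 := ⟨q - 1, (Nat.succ_pred_eq_of_pos hq).symm⟩
  set q : ℕ := m + 1 with hqdef
  have hq0 : (q : ℝ) ≠ 0 := by positivity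
  have hr : (0:ℝ) < Real.sqrt ((q:ℝ) + 1) := Real.sqrt_pos.mpr (by positivity)
  set r := Real.sqrt ((q:ℝ) + 1) with hrdef
  have hrne : r ≠ 0 := ne_of_gt hr
  have hr2 : r * r = (q:ℝ) + 1 := Real.mul_self_sqrt (by positivity)
  -- main derivative lemma for U
  have key : ∀ s, HasDerivAt U ((1/r) * U s * (U s ^ q - 1)) s := by
    intro s
    have hgpos : ∀ y : ℝ, 0 < 1 + k * Real.exp ((q:ℝ) * y / r) := fun y => by positivity
    have hinner : HasDerivAt (fun y : ℝ => (q:ℝ) * y / r) ((q:ℝ)/r) s := by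
      simpa using ((hasDerivAt_id s).const_mul (q:ℝ)).div_const r
    have hg : HasDerivAt (fun y => 1 + k * Real.exp ((q:ℝ)*y/r))
        (k * (Real.exp ((q:ℝ)*s/r) * ((q:ℝ)/r))) s :=
      ((hinner.exp).const_mul k).const_add 1
    have hpow := hg.rpow_const (p := -(1:ℝ)/q) (Or.inl (hgpos s).ne')
    have hUe : U = fun y => (1 + k * Real.exp ((q : ℝ) * y / r)) ^ (-(1:ℝ)/q) :=
      funext hU
    rw [hUe]
    convert hpow using 1
    have h1 : ((1 + k * Real.exp ((q:ℝ)*s/r)) ^ (-(1:ℝ)/(q:ℝ))) ^ q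
        = (1 + k * Real.exp ((q:ℝ)*s/r))⁻¹ := by
      rw [← Real.rpow_natCast (_ ^ (-(1:ℝ)/(q:ℝ))) q, ← Real.rpow_mul (hgpos s).le]
      rw [show (-(1:ℝ)/(q:ℝ)) * (q:ℝ) = -1 by field_simp]
      exact Real.rpow_neg_one _
    have h2 : (1 + k * Real.exp ((q:ℝ)*s/r)) ^ ((-(1:ℝ)/(q:ℝ)) - 1)
        = (1 + k * Real.exp ((q:ℝ)*s/r)) ^ (-(1:ℝ)/(q:ℝ)) / (1 + k * Real.exp ((q:ℝ)*s/r)) := by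
      rw [Real.rpow_sub (hgpos s), Real.rpow_one]
    rw [h1, h2]
    have hGne : (1 + k * Real.exp ((q:ℝ)*s/r)) ≠ 0 := (hgpos s).ne'
    field_simp
    ring
  constructor
  · exact fun s => (key s).deriv
  · intro x t
    have hDt : HasDerivAt (fun t' => u x t')
        ((1/r) * U (x - t/r) * (U (x - t/r) ^ q - 1) * (-(1/r))) t := by
      have he : (fun t' => u x t') = fun t' => U (x - t' / r) := funext fun t' => hu x t'
      rw [he]
      have hi : HasDerivAt (fun t' : ℝ => x - t' / r) (-(1/r)) t := by
        simpa using ((hasDerivAt_id t).div_const r).const_sub x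
      exact (key (x - t/r)).comp t hi
    have hVd : ∀ y, HasDerivAt (fun y' => u y' t) ((1/r) * u y t * (u y t ^ q - 1)) y := by
      intro y
      have he : (fun y' => u y' t) = fun y' => U (y' - t/r) := funext fun y' => hu y' t
      rw [he, hu y t]
      have hi : HasDerivAt (fun y' : ℝ => y' - t / r) 1 y := (hasDerivAt_id y).sub_const _
      simpa [Function.comp_def] using (key (y - t/r)).comp y hi
    have hderivW : deriv (fun x' => u x' t) = fun y => (1/r) * u y t * (u y t ^ q - 1) :=
      funext fun y => (hVd y).deriv
    have hW : HasDerivAt (fun y => (1/r) * u y t * (u y t ^ q - 1))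
        ((1/r) * ((1/r) * u x t * (u x t ^ q - 1)) * (u x t ^ q - 1)
          + (1/r) * u x t * ((q:ℝ) * u x t ^ (q-1) * ((1/r) * u x t * (u x t ^ q - 1)))) x := by
      exact (((hVd x).const_mul (1/r)).mul (((hVd x).pow q).sub_const 1))
    rw [hDt.deriv, hderivW, hW.deriv, ← hu x t]
    have hcc : (1/r) * (1/r) * ((m:ℝ) + 2) = 1 := by
      have : ((q:ℝ) + 1) = (m:ℝ) + 2 := by push_cast [hqdef]; ring
      rw [← this]; field_simp [hr2]; rw [sq]; exact hr2.symm
    simp only [hqdef, Nat.add_sub_cancel]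
    push_cast
    linear_combination (u x t ^ (m+2) * (1 - u x t ^ (m+1))) * hcc
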